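/- arXiv:2009.11521 — 3 statements merged into one kernel-verified Lean document; each statement's English description precedes it below -/
import Mathlib

section
/- Suppose X is a geodesic metric space and Y ⊂ X is a path-connected subspace that is a geodesic metric space with respect to the induced length metric d_Y, and suppose the inclusion map Y → X is uniformly metrically proper as measured by f: ℕ → ℕ. Then for every k ≥ 1 there is a constant k' = k'(k, f) such that every k-quasigeodesic of X whose image is contained in Y is a k'-quasigeodesic of (Y, d_Y). -/
/-! ### Core coarse-geometric definitions
Gromov products, hyperbolicity, Gromov boundaries, Cannon–Thurston maps,
word metrics, quasi-isometric embeddings, laminations. -/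

/-- The Gromov product of `x` and `y` with respect to the basepoint `o`,
for a distance function `d`. -/
noncomputable def gprod {X : Type*} (d : X → X → ℝ) (o x y : X) : ℝ :=
  (d x o + d y o - d x y) / 2

/-- A distance function is (Gromov) hyperbolic: the four point condition. -/
def IsHypD {X : Type*} (d : X → X → ℝ) : Prop :=
  ∃ δ : ℝ, 0 ≤ δ ∧ ∀ o x y z : X,
    min (gprod d o x y) (gprod d o y z) ≤ gprod d o x z + δ

/-- A sequence tends to infinity if its Gromov products tend to infinity. -/
def SeqToInf {X : Type*} (d : X → X → ℝ) (s : ℕ → X) : Prop :=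
  ∀ (o : X) (M : ℝ), ∃ N : ℕ, ∀ m n : ℕ, N ≤ m → N ≤ n → M ≤ gprod d o (s m) (s n)

/-- Two sequences tending to infinity determine the same boundary point. -/
def SeqFellow {X : Type*} (d : X → X → ℝ) (s t : ℕ → X) : Prop :=
  ∀ (o : X) (M : ℝ), ∃ N : ℕ, ∀ m n : ℕ, N ≤ m → N ≤ n → M ≤ gprod d o (s m) (t n)

/-- Sequences in `X` tending to infinity. -/
def BdryPre {X : Type*} (d : X → X → ℝ) : Type _ := { s : ℕ → X // SeqToInf d s }

/-- The (sequential model of the) Gromov boundary of `(X, d)`. -/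
def Bdry {X : Type*} (d : X → X → ℝ) : Type _ :=
  Quot fun s t : BdryPre d => SeqFellow d s.1 t.1

/-- The boundary point represented by a sequence tending to infinity. -/
def Bdry.mk {X : Type*} {d : X → X → ℝ} (s : BdryPre d) : Bdry d := Quot.mk _ s

/-- A sequence in `X` converges to the boundary point `ξ`. -/
def ConvTo {X : Type*} (d : X → X → ℝ) (s : ℕ → X) (ξ : Bdry d) : Prop :=
  ∃ h : SeqToInf d s, Bdry.mk ⟨s, h⟩ = ξ

/-- The visual topology on the Gromov boundary. -/
noncomputable instance bdryTopology {X : Type*} (d : X → X → ℝ) :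
    TopologicalSpace (Bdry d) :=
  TopologicalSpace.generateFrom
    { U | ∃ (o : X) (M : ℝ) (s : BdryPre d),
        U = { η | ∃ t : BdryPre d, Bdry.mk t = η ∧
          ∀ m n : ℕ, M ≤ gprod d o (s.1 m) (t.1 n) } }

/-- `g` is a Cannon–Thurston map for `f : (Y,dY) → (X,dX)`: it is continuous and,
whenever a sequence in `Y` converges to a boundary point `ξ`, the image sequence
converges to `g ξ`. -/
def IsCTMapD {Y X : Type*} (dY : Y → Y → ℝ) (dX : X → X → ℝ)
    (f : Y → X) (g : Bdry dY → Bdry dX) : Prop :=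
  Continuous g ∧
    ∀ (s : ℕ → Y) (ξ : Bdry dY), ConvTo dY s ξ → ConvTo dX (fun n => f (s n)) (g ξ)

/-- `f : (Y,dY) → (X,dX)` admits a Cannon–Thurston map. -/
def AdmitsCT {Y X : Type*} (dY : Y → Y → ℝ) (dX : X → X → ℝ) (f : Y → X) : Prop :=
  ∃ g, IsCTMapD dY dX f g

/-- The limit set of `A ⊆ X` in the Gromov boundary of `(X,d)`. -/
def limitSetD {X : Type*} (d : X → X → ℝ) (A : Set X) : Set (Bdry d) :=
  { ξ | ∃ s : ℕ → X, (∀ n, s n ∈ A) ∧ ConvTo d s ξ }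

/-- Quasi-isometric embedding with multiplicative/additive constant `k`. -/
def IsQIEmbWith {Y X : Type*} (dY : Y → Y → ℝ) (dX : X → X → ℝ) (k : ℝ) (f : Y → X) : Prop :=
  ∀ y y' : Y, dY y y' / k - k ≤ dX (f y) (f y') ∧ dX (f y) (f y') ≤ k * dY y y' + k

/-- Quasi-isometric embedding. -/
def IsQIEmbD {Y X : Type*} (dY : Y → Y → ℝ) (dX : X → X → ℝ) (f : Y → X) : Prop :=
  ∃ k : ℝ, 1 ≤ k ∧ IsQIEmbWith dY dX k f

/-- `A` is contained in a finite (`d`-)neighborhood of `B`. -/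
def InFiniteNbhd {X : Type*} (d : X → X → ℝ) (A B : Set X) : Prop :=
  ∃ D : ℝ, ∀ a ∈ A, ∃ b ∈ B, d a b ≤ D

/-- The word length of `g` with respect to `S` (inverses of generators allowed). -/
noncomputable def wordLength {G : Type*} [Group G] (S : Set G) (g : G) : ℕ :=
  sInf { n : ℕ | ∃ l : List G, (∀ x ∈ l, x ∈ S ∨ x⁻¹ ∈ S) ∧ l.length = n ∧ l.prod = g }

/-- The word metric on `G` with respect to `S`. -/
noncomputable def wordDist {G : Type*} [Group G] (S : Set G) (g h : G) : ℝ :=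
  wordLength S (g⁻¹ * h)

/-- `S` is a finite generating set of `G`. -/
def GenSet {G : Type*} [Group G] (S : Set G) : Prop :=
  S.Finite ∧ Subgroup.closure S = ⊤

/-- A finitely generated group is hyperbolic if some (equivalently, any) of its
word metrics with respect to a finite generating set is Gromov hyperbolic. -/
def IsHypGroup (G : Type*) [Group G] : Prop :=
  ∃ S : Set G, GenSet S ∧ IsHypD (wordDist S)

/-- The standard distance on `ℤ` (to parametrize (quasi)geodesic lines). -/
noncomputable def zdist : ℤ → ℤ → ℝ := fun m n => |(m : ℝ) - (n : ℝ)|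

/-- A quasigeodesic line in `(Y,dY)`. -/
def IsQGLine {Y : Type*} (dY : Y → Y → ℝ) (α : ℤ → Y) : Prop :=
  IsQIEmbD zdist dY α

/-- `α` is a leaf of the Cannon–Thurston lamination of `f`, whose CT map is `g`:
a quasigeodesic line whose two distinct endpoints at infinity are identified by `g`. -/
def IsLeafD {Y X : Type*} (dY : Y → Y → ℝ) (dX : X → X → ℝ)
    (f : Y → X) (g : Bdry dY → Bdry dX) (α : ℤ → Y) : Prop :=
  IsQGLine dY α ∧
  ∃ ξp ξm : Bdry dY,
    ConvTo dY (fun n : ℕ => α (n : ℤ)) ξp ∧ ConvTo dY (fun n : ℕ => α (-(n : ℤ))) ξm ∧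
    ξp ≠ ξm ∧ g ξp = g ξm

/-- A finitely generated subgroup `H ≤ G` is qi embedded (= quasiconvex when `G` is
hyperbolic, = undistorted): the inclusion is a quasi-isometric embedding for word
metrics coming from finite generating sets (this does not depend on the choices). -/
def QIEmbSubgroup {G : Type*} [Group G] (H : Subgroup G) : Prop :=
  ∃ (S : Set G) (T : Set ↥H), GenSet S ∧ GenSet T ∧
    IsQIEmbD (wordDist T) (wordDist S) (Subtype.val : ↥H → G)

/-- A group is virtually cyclic (elementary). -/
def VirtCyclic (G : Type*) [Group G] : Prop :=
  ∃ H : Subgroup G, (∃ g : G, H = Subgroup.zpowers g) ∧ H.index ≠ 0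

/-- A geodesic metric space. -/
def IsGeodesicMS (X : Type*) [MetricSpace X] : Prop :=
  ∀ x y : X, ∃ γ : ℝ → X, γ 0 = x ∧ γ (dist x y) = y ∧
    ∀ s ∈ Set.Icc (0:ℝ) (dist x y), ∀ t ∈ Set.Icc (0:ℝ) (dist x y),
      dist (γ s) (γ t) = |s - t|

/-- If `Y ⊆ X` is a path-connected subspace of a geodesic metric
space `X`, itself geodesic for the induced length metric (so that the inclusion
`ι : Y → X` is 1-Lipschitz), and the inclusion is uniformly metrically proper as
measured by `f : ℕ → ℕ`, then for every `k ≥ 1` there is `k' = k'(k, f)` such that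
every `k`-quasigeodesic of `X` contained in `Y` is a `k'`-quasigeodesic of `Y`. -/
theorem stmt_1 (f : ℕ → ℕ) (k : ℝ) (hk : 1 ≤ k) :
    ∃ k' : ℝ, 1 ≤ k' ∧
      ∀ (X : Type u) (Y : Type v) [MetricSpace X] [MetricSpace Y],
        ProperSpace X → IsGeodesicMS X → IsGeodesicMS Y →
        ∀ ι : Y → X, Function.Injective ι →
          (∀ y y' : Y, dist (ι y) (ι y') ≤ dist y y') →
          (∀ (y y' : Y) (R : ℕ), dist (ι y) (ι y') ≤ (R : ℝ) → dist y y' ≤ (f R : ℝ)) →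
          ∀ J : Set ℝ, J.OrdConnected →
            ∀ α : ℝ → Y,
              (∀ s ∈ J, ∀ t ∈ J,
                |s - t| / k - k ≤ dist (ι (α s)) (ι (α t)) ∧
                  dist (ι (α s)) (ι (α t)) ≤ k * |s - t| + k) →
              (∀ s ∈ J, ∀ t ∈ J,
                |s - t| / k' - k' ≤ dist (α s) (α t) ∧
                  dist (α s) (α t) ≤ k' * |s - t| + k') := by
  set C : ℝ := (f ⌈2 * k⌉₊ : ℝ) with hCdef
  have hC0 : (0:ℝ) ≤ C := Nat.cast_nonneg _
  have hk0 : (0:ℝ) < k := lt_of_lt_of_le one_pos hk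
  refine ⟨k + C, by linarith, ?_⟩
  intro X Y _ _ _hX _hgX _hgY ι _hinj hlip hprop J hJ α hα s hs t ht
  constructor
  · -- lower bound
    have h1 := (hα s hs t ht).1
    have h2 := hlip (α s) (α t)
    have h3 : |s - t| / (k + C) ≤ |s - t| / k :=
      div_le_div_of_nonneg_left (abs_nonneg _) hk0 (by linarith)
    linarith
  · -- upper bound
    rcases eq_or_ne s t with rfl | hst
    · simp only [dist_self]
      nlinarith [abs_nonneg (s - s)]
    · set n : ℕ := ⌈|s - t|⌉₊ with hndef
      have hn : 0 < n := Nat.ceil_pos.mpr (abs_pos.mpr (sub_ne_zero.mpr hst))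
      have hnR : (0:ℝ) < n := by exact_mod_cast hn
      have hle : |s - t| ≤ (n : ℝ) := Nat.le_ceil _
      set p : ℕ → ℝ := fun i => s + i * (t - s) / n with hpdef
      have hp0 : p 0 = s := by simp [hpdef]
      have hpn : p n = t := by
        simp only [hpdef]
        field_simp
        ring
      have hmem : ∀ i ≤ n, p i ∈ J := by
        intro i hi
        have hiR : (i : ℝ) ≤ n := by exact_mod_cast hi
        have hi0 : (0:ℝ) ≤ i := Nat.cast_nonneg _
        have : p i ∈ Set.uIcc s t := by
          rcases le_total s t with hto | hto
          · rw [Set.uIcc_of_le hto, Set.mem_Icc]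
            constructor
            · simp only [hpdef]
              have : (0:ℝ) ≤ (i : ℝ) * (t - s) / n :=
                div_nonneg (mul_nonneg hi0 (by linarith)) hnR.le
              linarith
            · simp only [hpdef]
              have : (i : ℝ) * (t - s) / n ≤ (n : ℝ) * (t - s) / n := by
                apply div_le_div_of_nonneg_right ?_ hnR.le
                exact mul_le_mul_of_nonneg_right hiR (by linarith)
              have h2 : (n : ℝ) * (t - s) / n = t - s := by field_simp
              linarith
          · rw [Set.uIcc_of_ge hto, Set.mem_Icc]
            constructor
            · simp only [hpdef]
              have : (n : ℝ) * (t - s) / n ≤ (i : ℝ) * (t - s) / n := by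
                apply div_le_div_of_nonneg_right ?_ hnR.le
                nlinarith
              have h2 : (n : ℝ) * (t - s) / n = t - s := by field_simp
              linarith
            · simp only [hpdef]
              have : (i : ℝ) * (t - s) / n ≤ 0 := by
                apply div_nonpos_of_nonpos_of_nonneg ?_ hnR.le
                nlinarith
              linarith
        exact hJ.uIcc_subset hs ht this
      have hstep : ∀ i < n, dist (α (p i)) (α (p (i + 1))) ≤ C := by
        intro i hi
        have hd : |p i - p (i + 1)| = |t - s| / n := by
          have : p i - p (i + 1) = -((t - s) / n) := by
            simp only [hpdef]; push_cast; ring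
          rw [this, abs_neg, abs_div, abs_of_pos hnR]
        have hd1 : |p i - p (i + 1)| ≤ 1 := by
          rw [hd, div_le_one hnR]
          rw [abs_sub_comm] at hle; exact hle
        have hX := (hα (p i) (hmem i hi.le) (p (i + 1)) (hmem (i + 1) hi)).2
        have h2k : dist (ι (α (p i))) (ι (α (p (i + 1)))) ≤ ((⌈2 * k⌉₊ : ℕ) : ℝ) := by
          have : (2 * k : ℝ) ≤ (⌈2 * k⌉₊ : ℝ) := Nat.le_ceil _
          nlinarith
        exact hprop _ _ _ h2k
      have hsum : dist (α (p 0)) (α (p n)) ≤ (n : ℝ) * C := by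
        calc dist (α (p 0)) (α (p n)) ≤
            ∑ i ∈ Finset.range n, dist (α (p i)) (α (p (i + 1))) :=
              dist_le_range_sum_dist (fun i => α (p i)) n
          _ ≤ (n : ℝ) * C := by
              have h := Finset.sum_le_card_nsmul (Finset.range n)
                (fun i => dist (α (p i)) (α (p (i + 1)))) C
                (fun i hi => hstep i (Finset.mem_range.mp hi))
              simpa [Finset.card_range, nsmul_eq_mul] using h
      rw [hp0, hpn] at hsum
      have hceil : (n : ℝ) < |s - t| + 1 := Nat.ceil_lt_add_one (abs_nonneg _)
      nlinarith [abs_nonneg (s - t)]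
end

section
/- Let G be a finitely presented group and H, K two subgroups of G with H finitely generated. Let S ⊂ G and S₁ ⊂ H be finite generating sets with Cayley graphs Γ = Γ(G, S) and Γ₁ = Γ(H, S₁). Let D > 0 and suppose A is an infinite subset of N_D(K) ∩ H, where N_D(K) is the D-neighborhood of K in Γ. Suppose there exists r ≥ 1 such that any pair of points of A can be connected by a path lying in the r-neighborhood of A in Γ₁. Then there is a finitely generated infinite subgroup K₁ < H ∩ K such that A/K₁ is finite; in particular, A is contained in a finite neighborhood of K₁ in Γ. -/
/-- A finitely presented group. -/
def IsFinitelyPresentedGroup (G : Type*) [Group G] : Prop :=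
  ∃ (n : ℕ) (rels : Set (FreeGroup (Fin n))),
    rels.Finite ∧ Nonempty (PresentedGroup rels ≃* G)

namespace Stmt3Aux

variable {G : Type*} [Group G] {S : Set G}

lemma exists_min_word (hgen : Subgroup.closure S = ⊤) (g : G) :
    ∃ l : List G, (∀ x ∈ l, x ∈ S ∨ x⁻¹ ∈ S) ∧ l.length = wordLength S g ∧ l.prod = g := by
  have hg : g ∈ Submonoid.closure (S ∪ S⁻¹) := by
    rw [← Subgroup.closure_toSubmonoid, hgen]; trivial
  obtain ⟨l, hl, hp⟩ := Submonoid.exists_list_of_mem_closure hg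
  have hl' : ∀ x ∈ l, x ∈ S ∨ x⁻¹ ∈ S := by
    intro x hx
    rcases hl x hx with h | h
    · exact Or.inl h
    · exact Or.inr (Set.mem_inv.mp h)
  have hne : { n : ℕ | ∃ l : List G, (∀ x ∈ l, x ∈ S ∨ x⁻¹ ∈ S) ∧ l.length = n ∧ l.prod = g }.Nonempty :=
    ⟨l.length, l, hl', rfl, hp⟩
  exact Nat.sInf_mem hne

lemma wordLength_le (l : List G) (hl : ∀ x ∈ l, x ∈ S ∨ x⁻¹ ∈ S) :
    wordLength S l.prod ≤ l.length := Nat.sInf_le ⟨l, hl, rfl, rfl⟩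

lemma wordLength_one : wordLength S (1 : G) = 0 :=
  Nat.le_zero.mp (by simpa using wordLength_le (S := S) [] (by simp))

lemma wordLength_mul_le (hgen : Subgroup.closure S = ⊤) (g h : G) :
    wordLength S (g * h) ≤ wordLength S g + wordLength S h := by
  obtain ⟨l₁, hl₁, hlen₁, hp₁⟩ := exists_min_word hgen g
  obtain ⟨l₂, hl₂, hlen₂, hp₂⟩ := exists_min_word hgen h
  have := wordLength_le (l₁ ++ l₂) (by
    intro x hx
    rcases List.mem_append.mp hx with h | h
    exacts [hl₁ x h, hl₂ x h])
  simpa [hp₁, hp₂, hlen₁, hlen₂] using this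

lemma wordLength_inv_le (hgen : Subgroup.closure S = ⊤) (g : G) :
    wordLength S g⁻¹ ≤ wordLength S g := by
  obtain ⟨l, hl, hlen, hp⟩ := exists_min_word hgen g
  have hmem : ∀ x ∈ (l.map fun y => y⁻¹).reverse, x ∈ S ∨ x⁻¹ ∈ S := by
    intro x hx
    simp only [List.mem_reverse, List.mem_map] at hx
    obtain ⟨y, hy, rfl⟩ := hx
    rcases hl y hy with h | h
    · exact Or.inr (by simpa using h)
    · exact Or.inl h
  have h2 := wordLength_le _ hmem
  rw [← List.prod_inv_reverse, hp] at h2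
  simpa [hlen] using h2

lemma ball_finite (hfin : S.Finite) (hgen : Subgroup.closure S = ⊤) (n : ℕ) :
    {g : G | wordLength S g ≤ n}.Finite := by
  induction n with
  | zero =>
    refine (Set.finite_singleton (1 : G)).subset ?_
    intro g hg
    obtain ⟨l, hl, hlen, hp⟩ := exists_min_word hgen g
    have hg0 : wordLength S g ≤ 0 := hg
    have : l = [] := List.length_eq_zero_iff.mp (by omega)
    simp [this] at hp
    simp [← hp]
  | succ n ih =>
    refine (((hfin.union hfin.inv).biUnion
      (fun x _ => ih.image (fun g => x * g))).union (Set.finite_singleton 1)).subset ?_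
    intro g hg
    obtain ⟨l, hl, hlen, hp⟩ := exists_min_word hgen g
    match l, hl, hlen, hp with
    | [], _, _, hp => exact Or.inr (by simp [← hp])
    | x :: l', hl, hlen, hp =>
      refine Or.inl ?_
      have hx : x ∈ S ∪ S⁻¹ := by
        rcases hl x List.mem_cons_self with h | h
        · exact Or.inl h
        · exact Or.inr (Set.mem_inv.mpr h)
      refine Set.mem_biUnion hx ?_
      refine ⟨l'.prod, ?_, by simpa using hp⟩
      have h1 : wordLength S l'.prod ≤ l'.length :=
        wordLength_le l' (fun y hy => hl y (List.mem_cons_of_mem _ hy))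
      have h2 : (x :: l').length = wordLength S g := hlen
      simp only [List.length_cons] at h2
      have : wordLength S g ≤ n + 1 := hg
      simp only [Set.mem_setOf_eq]
      omega

lemma wordDist_triangle (hgen : Subgroup.closure S = ⊤) (x y z : G) :
    wordDist S x z ≤ wordDist S x y + wordDist S y z := by
  have h := wordLength_mul_le hgen (x⁻¹ * y) (y⁻¹ * z)
  have he : (x⁻¹ * y) * (y⁻¹ * z) = x⁻¹ * z := by group
  rw [he] at h
  unfold wordDist
  exact_mod_cast h

lemma wordDist_symm_le (hgen : Subgroup.closure S = ⊤) (x y : G) :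
    wordDist S y x ≤ wordDist S x y := by
  have h := wordLength_inv_le hgen (x⁻¹ * y)
  have he : (x⁻¹ * y)⁻¹ = y⁻¹ * x := by group
  rw [he] at h
  unfold wordDist
  exact_mod_cast h

lemma wordDist_self (x : G) : wordDist S x x = 0 := by
  unfold wordDist
  simp [wordLength_one]

lemma exists_bound_of_finite {α : Type*} {T : Set α} (hT : T.Finite) (f : α → ℕ) :
    ∃ C : ℕ, ∀ t ∈ T, f t ≤ C := by
  obtain ⟨C, hC⟩ := (hT.image f).bddAbove
  exact ⟨C, fun t ht => hC (Set.mem_image_of_mem f ht)⟩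

end Stmt3Aux

open Stmt3Aux

/-- Proposition 2.2. Let `G` be a finitely presented group, `H, K`
subgroups with `H` finitely generated, `S`, `S₁` finite generating sets of `G`, `H`
with Cayley graphs `Γ = Γ(G,S)`, `Γ₁ = Γ(H,S₁)`. Let `D > 0` and let `A` be an
infinite subset of `N_D(K) ∩ H` (neighborhood in `Γ`). Suppose any two points of `A`
are connected by a path (a chain of steps of length `≤ 1` in `Γ₁`) lying in the
`r`-neighborhood of `A` in `Γ₁`, for some `r ≥ 1`. Then there is a finitely
generated infinite subgroup `K₁ ≤ H ⊓ K` such that `A/K₁` is finite; in particular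
`A` lies in a finite neighborhood of `K₁` in `Γ`. -/
theorem stmt_3 {G : Type*} [Group G]
    (hfp : IsFinitelyPresentedGroup G)
    (H K : Subgroup G)
    (S : Set G) (hS : GenSet S)
    (S₁ : Set ↥H) (hS₁ : GenSet S₁)
    (D : ℝ) (hD : 0 < D)
    (A : Set ↥H) (hAinf : A.Infinite)
    (hAnbhd : ∀ a ∈ A, ∃ k ∈ K, wordDist S (a : G) k ≤ D)
    (r : ℝ) (hr : 1 ≤ r)
    (hpath : ∀ a ∈ A, ∀ a' ∈ A, ∃ (n : ℕ) (c : ℕ → ↥H),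
      c 0 = a ∧ c n = a' ∧
      (∀ i < n, wordDist S₁ (c i) (c (i + 1)) ≤ 1) ∧
      (∀ i ≤ n, ∃ b ∈ A, wordDist S₁ (c i) b ≤ r)) :
    ∃ K₁ : Subgroup G, K₁ ≤ H ⊓ K ∧ K₁.FG ∧ (K₁ : Set G).Infinite ∧
      (∃ T : Set ↥H, T.Finite ∧ ∀ a ∈ A, ∃ g ∈ K₁, ∃ t ∈ T, (a : G) = g * (t : G)) ∧
      (∃ R : ℝ, ∀ a ∈ A, ∃ g ∈ K₁, wordDist S (a : G) g ≤ R) := by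
  classical
  obtain ⟨hSfin, hSgen⟩ := hS
  obtain ⟨hS₁fin, hS₁gen⟩ := hS₁
  -- choose nearby elements of K
  have hκex : ∀ a : ↥H, ∃ k : G, a ∈ A → (k ∈ K ∧ wordDist S (a : G) k ≤ D) := by
    intro a
    by_cases ha : a ∈ A
    · obtain ⟨k, hk1, hk2⟩ := hAnbhd a ha
      exact ⟨k, fun _ => ⟨hk1, hk2⟩⟩
    · exact ⟨1, fun h => absurd h ha⟩
  choose κ hκ using hκex
  set τ : ↥H → G := fun a => (a : G)⁻¹ * κ a with hτdef
  have hτball : ∀ a ∈ A, wordLength S (τ a) ≤ Nat.floor D := by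
    intro a ha
    have h2 : ((wordLength S ((a : G)⁻¹ * κ a) : ℝ)) ≤ D := (hκ a ha).2
    exact Nat.le_floor h2
  -- representatives of types
  have hrepex : ∀ u : G, ∃ t : ↥H, (∃ b, b ∈ A ∧ τ b = u) → (t ∈ A ∧ τ t = u) := by
    intro u
    by_cases h : ∃ b, b ∈ A ∧ τ b = u
    · obtain ⟨b, hbA, hbu⟩ := h
      exact ⟨b, fun _ => ⟨hbA, hbu⟩⟩
    · exact ⟨1, fun hh => absurd hh h⟩
  choose rep hrep using hrepex
  have hrepA : ∀ a ∈ A, rep (τ a) ∈ A ∧ τ (rep (τ a)) = τ a :=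
    fun a ha => hrep (τ a) ⟨a, ha, rfl⟩
  -- ψ(a) := a * rep(τ a)⁻¹ lies in K
  have hψK : ∀ a ∈ A, ((a : G) * ((rep (τ a) : ↥H) : G)⁻¹) ∈ K := by
    intro a ha
    obtain ⟨htA, hτt⟩ := hrepA a ha
    have h1 : ((rep (τ a) : ↥H) : G)⁻¹ * κ (rep (τ a)) = (a : G)⁻¹ * κ a := hτt
    have h2 : (a : G) * (((rep (τ a) : ↥H) : G)⁻¹ * κ (rep (τ a))) = κ a := by
      rw [h1, mul_inv_cancel_left]
    have key : (a : G) * ((rep (τ a) : ↥H) : G)⁻¹ = κ a * (κ (rep (τ a)))⁻¹ := by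
      rw [← h2]
      group
    rw [key]
    exact K.mul_mem (hκ a ha).1 (K.inv_mem (hκ _ htA).1)
  -- finite data
  have hBallfin := ball_finite hSfin hSgen (Nat.floor D)
  set T : Set ↥H := rep '' {g : G | wordLength S g ≤ Nat.floor D} with hTdef
  have hT : T.Finite := hBallfin.image rep
  have hTmem : ∀ a ∈ A, rep (τ a) ∈ T := fun a ha => ⟨τ a, hτball a ha, rfl⟩
  obtain ⟨C, hC⟩ := exists_bound_of_finite hT (wordLength S₁)
  set M : ℕ := Nat.floor (r + 1 + r) with hMdef
  set C' : ℕ := C + M + C with hC'def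
  set X : Set ↥H := {h : ↥H | ((h : G) ∈ K) ∧ wordLength S₁ h ≤ C'} with hXdef
  have hXfin : X.Finite := (ball_finite hS₁fin hS₁gen C').subset (fun h hh => hh.2)
  set K₁ : Subgroup G := Subgroup.closure (Subtype.val '' X) with hK₁def
  -- main claim: ψ(a) ∈ K₁ for all a ∈ A
  have hψK₁ : ∀ a ∈ A, ((a : G) * ((rep (τ a) : ↥H) : G)⁻¹) ∈ K₁ := by
    intro a ha
    obtain ⟨htA, hτt⟩ := hrepA a ha
    obtain ⟨n, c, hc0, hcn, hstep, hnear⟩ := hpath (rep (τ a)) htA a ha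
    have hbex : ∀ i : ℕ, ∃ b : ↥H, i ≤ n →
        (b ∈ A ∧ wordDist S₁ (c i) b ≤ r ∧ (i = 0 → b = rep (τ a)) ∧ (i = n → b = a)) := by
      intro i
      by_cases hin : i ≤ n
      · by_cases h0 : i = 0
        · subst h0
          refine ⟨rep (τ a), fun _ => ⟨htA, ?_, fun _ => rfl, fun hn => ?_⟩⟩
          · rw [← hc0, wordDist_self]
            linarith
          · have hce : c 0 = a := by rw [hn]; exact hcn
            rw [← hc0, hce]
        · by_cases hn : i = n
          · subst hn
            refine ⟨a, fun _ => ⟨ha, ?_, fun h0' => absurd h0' h0, fun _ => rfl⟩⟩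
            rw [hcn, wordDist_self]
            linarith
          · obtain ⟨b, hbA, hbd⟩ := hnear i hin
            exact ⟨b, fun _ => ⟨hbA, hbd, fun h0' => absurd h0' h0, fun hn' => absurd hn' hn⟩⟩
      · exact ⟨1, fun h => absurd h hin⟩
    choose b hb using hbex
    have hbn : b n = a := (hb n le_rfl).2.2.2 rfl
    have hmain : ∀ i, i ≤ n → (((b i : ↥H) : G) * ((rep (τ (b i)) : ↥H) : G)⁻¹) ∈ K₁ := by
      intro i
      induction i with
      | zero =>
        intro _
        have hb0 : b 0 = rep (τ a) := (hb 0 (Nat.zero_le n)).2.2.1 rfl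
        rw [hb0, hτt]
        simpa using K₁.one_mem
      | succ i ih =>
        intro hin
        have hi : i ≤ n := le_of_lt (Nat.lt_of_lt_of_le (Nat.lt_succ_self i) hin)
        have hbiA := (hb i hi).1
        have hbi1A := (hb (i + 1) hin).1
        have hdist : wordDist S₁ (b i) (b (i + 1)) ≤ r + 1 + r := by
          have t1 := wordDist_triangle hS₁gen (b i) (c i) (b (i + 1))
          have t2 := wordDist_triangle hS₁gen (c i) (c (i + 1)) (b (i + 1))
          have s1 : wordDist S₁ (b i) (c i) ≤ r :=
            le_trans (wordDist_symm_le hS₁gen _ _) ((hb i hi).2.1)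
          have s2 : wordDist S₁ (c (i + 1)) (b (i + 1)) ≤ r := (hb (i + 1) hin).2.1
          have s3 := hstep i (Nat.lt_of_lt_of_le (Nat.lt_succ_self i) hin)
          linarith
        have hdist' : ((wordLength S₁ ((b i)⁻¹ * b (i + 1)) : ℝ)) ≤ r + 1 + r := hdist
        have hmid : wordLength S₁ ((b i)⁻¹ * b (i + 1)) ≤ M := Nat.le_floor hdist'
        have hτbi : rep (τ (b i)) ∈ T := ⟨τ (b i), hτball _ hbiA, rfl⟩
        have hτbi1 : rep (τ (b (i + 1))) ∈ T := ⟨τ (b (i + 1)), hτball _ hbi1A, rfl⟩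
        have hlen : wordLength S₁
            (rep (τ (b i)) * ((b i)⁻¹ * b (i + 1)) * (rep (τ (b (i + 1))))⁻¹) ≤ C' := by
          have h1 : wordLength S₁ (rep (τ (b i)) * ((b i)⁻¹ * b (i + 1))) ≤ C + M :=
            le_trans (wordLength_mul_le hS₁gen _ _) (Nat.add_le_add (hC _ hτbi) hmid)
          have h2 : wordLength S₁ ((rep (τ (b (i + 1))))⁻¹) ≤ C :=
            le_trans (wordLength_inv_le hS₁gen _) (hC _ hτbi1)
          calc wordLength S₁ _
              ≤ wordLength S₁ (rep (τ (b i)) * ((b i)⁻¹ * b (i + 1)))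
                + wordLength S₁ ((rep (τ (b (i + 1))))⁻¹) := wordLength_mul_le hS₁gen _ _
            _ ≤ (C + M) + C := Nat.add_le_add h1 h2
        have hXmem : (rep (τ (b i)) * ((b i)⁻¹ * b (i + 1)) * (rep (τ (b (i + 1))))⁻¹) ∈ X := by
          refine ⟨?_, hlen⟩
          have hval : (((rep (τ (b i)) * ((b i)⁻¹ * b (i + 1)) * (rep (τ (b (i + 1))))⁻¹ : ↥H)) : G)
              = (((b i : ↥H) : G) * ((rep (τ (b i)) : ↥H) : G)⁻¹)⁻¹
                * (((b (i + 1) : ↥H) : G) * ((rep (τ (b (i + 1))) : ↥H) : G)⁻¹) := by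
            push_cast
            group
          rw [hval]
          exact K.mul_mem (K.inv_mem (hψK _ hbiA)) (hψK _ hbi1A)
        have hstep' : (((b (i + 1) : ↥H) : G) * ((rep (τ (b (i + 1))) : ↥H) : G)⁻¹)
            = (((b i : ↥H) : G) * ((rep (τ (b i)) : ↥H) : G)⁻¹)
              * (((rep (τ (b i)) * ((b i)⁻¹ * b (i + 1)) * (rep (τ (b (i + 1))))⁻¹ : ↥H)) : G) := by
          push_cast
          group
        rw [hstep']
        exact K₁.mul_mem (ih hi) (Subgroup.subset_closure ⟨_, hXmem, rfl⟩)
    have := hmain n le_rfl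
    rwa [hbn] at this
  -- assemble
  refine ⟨K₁, ?_, ?_, ?_, ?_, ?_⟩
  · rw [hK₁def, Subgroup.closure_le]
    rintro g ⟨h, hh, rfl⟩
    simp only [SetLike.mem_coe, Subgroup.mem_inf]
    exact ⟨h.2, hh.1⟩
  · exact ⟨(hXfin.image Subtype.val).toFinset, by rw [Set.Finite.coe_toFinset, ← hK₁def]⟩
  · have : ¬ (K₁ : Set G).Finite := by
      intro hfin
      have hsub : (fun a : ↥H => ((a : G) * ((rep (τ a) : ↥H) : G)⁻¹, rep (τ a))) '' A
          ⊆ (K₁ : Set G) ×ˢ T := by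
        rintro p ⟨a, ha, rfl⟩
        exact ⟨hψK₁ a ha, hTmem a ha⟩
      have hfin2 := (hfin.prod hT).subset hsub
      have hinj : Set.InjOn (fun a : ↥H => ((a : G) * ((rep (τ a) : ↥H) : G)⁻¹, rep (τ a))) A := by
        intro a₁ h₁ a₂ h₂ h
        have h1 : (a₁ : G) * ((rep (τ a₁) : ↥H) : G)⁻¹ = (a₂ : G) * ((rep (τ a₂) : ↥H) : G)⁻¹ :=
          congrArg Prod.fst h
        have h2 : rep (τ a₁) = rep (τ a₂) := congrArg Prod.snd h
        apply Subtype.ext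
        rw [h2] at h1
        exact mul_right_cancel h1
      exact hAinf (Set.Finite.of_finite_image hfin2 hinj)
    exact this
  · refine ⟨T, hT, fun a ha => ⟨(a : G) * ((rep (τ a) : ↥H) : G)⁻¹, hψK₁ a ha,
      rep (τ a), hTmem a ha, by group⟩⟩
  · obtain ⟨R, hRb⟩ := exists_bound_of_finite hT (fun t => wordLength S ((t : G))⁻¹)
    refine ⟨(R : ℝ), fun a ha => ⟨(a : G) * ((rep (τ a) : ↥H) : G)⁻¹, hψK₁ a ha, ?_⟩⟩
    have heq : wordDist S (a : G) ((a : G) * ((rep (τ a) : ↥H) : G)⁻¹)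
        = ((wordLength S (((rep (τ a) : ↥H) : G)⁻¹) : ℝ)) := by
      unfold wordDist
      rw [inv_mul_cancel_left]
    rw [heq]
    exact_mod_cast hRb _ (hTmem a ha)
end

section
/- Suppose a hyperbolic group G acts by isometries on a hyperbolic metric space X and the action is properly discontinuous. Suppose x ∈ X and the orbit map h: G → X given by h(g) = g·x admits a Cannon–Thurston map ∂h: ∂G → ∂X. If h is not a quasi-isometric embedding, then there are points ξ₁ ≠ ξ₂ in ∂G such that ∂h(ξ₁) = ∂h(ξ₂). In particular, if H is a hyperbolic subgroup of a hyperbolic group G, the inclusion H → G admits a CT map, and H is not quasi-isometrically embedded in G, then the CT map ∂H → ∂G is not injective. -/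
open Pointwise

section WordMetric

variable {G : Type*} [Group G] {S : Set G}

/-- Letters of words. -/
def IsSWord (S : Set G) (l : List G) : Prop := ∀ x ∈ l, x ∈ S ∨ x⁻¹ ∈ S

lemma exists_word (hS : Subgroup.closure S = ⊤) (g : G) :
    ∃ l : List G, IsSWord S l ∧ l.prod = g := by
  have hg : g ∈ Subgroup.closure S := by rw [hS]; trivial
  induction hg using Subgroup.closure_induction with
  | mem x hx => exact ⟨[x], fun y hy => by simp_all, by simp⟩
  | one => exact ⟨[], fun y hy => by simp_all, by simp⟩
  | mul x y hx hy ihx ihy =>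
      obtain ⟨l1, hl1, hp1⟩ := ihx
      obtain ⟨l2, hl2, hp2⟩ := ihy
      refine ⟨l1 ++ l2, fun z hz => ?_, by simp [hp1, hp2]⟩
      rcases List.mem_append.1 hz with h | h
      · exact hl1 z h
      · exact hl2 z h
  | inv x hx ihx =>
      obtain ⟨l, hl, hp⟩ := ihx
      refine ⟨(l.map Inv.inv).reverse, fun z hz => ?_, ?_⟩
      · simp only [List.mem_reverse, List.mem_map] at hz
        obtain ⟨a, ha, rfl⟩ := hz
        rcases hl a ha with h | h
        · exact Or.inr (by simpa using h)
        · exact Or.inl h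
      · rw [← hp, ← List.prod_inv_reverse]

lemma wlSet_nonempty (hS : Subgroup.closure S = ⊤) (g : G) :
    {n : ℕ | ∃ l : List G, (∀ x ∈ l, x ∈ S ∨ x⁻¹ ∈ S) ∧ l.length = n ∧ l.prod = g}.Nonempty := by
  obtain ⟨l, hl, hp⟩ := exists_word hS g
  exact ⟨l.length, l, hl, rfl, hp⟩

lemma exists_min_word (hS : Subgroup.closure S = ⊤) (g : G) :
    ∃ l : List G, IsSWord S l ∧ l.length = wordLength S g ∧ l.prod = g :=
  Nat.sInf_mem (wlSet_nonempty hS g)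

lemma wordLength_le (l : List G) (hl : IsSWord S l) : wordLength S l.prod ≤ l.length :=
  Nat.sInf_le ⟨l, hl, rfl, rfl⟩

lemma wordLength_one : wordLength S (1 : G) = 0 :=
  Nat.le_zero.1 (by simpa using wordLength_le ([] : List G) (by intro x hx; simp_all))

lemma wordLength_mul_le (hS : Subgroup.closure S = ⊤) (g h : G) :
    wordLength S (g * h) ≤ wordLength S g + wordLength S h := by
  obtain ⟨l1, hl1, hlen1, hp1⟩ := exists_min_word hS g
  obtain ⟨l2, hl2, hlen2, hp2⟩ := exists_min_word hS h
  have : IsSWord S (l1 ++ l2) := by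
    intro z hz
    rcases List.mem_append.1 hz with h' | h'
    · exact hl1 z h'
    · exact hl2 z h'
  have := wordLength_le (l1 ++ l2) this
  simpa [hp1, hp2, hlen1, hlen2] using this

lemma wordLength_inv_le (hS : Subgroup.closure S = ⊤) (g : G) :
    wordLength S g⁻¹ ≤ wordLength S g := by
  obtain ⟨l, hl, hlen, hp⟩ := exists_min_word hS g
  have hw : IsSWord S (l.map Inv.inv).reverse := by
    intro z hz
    simp only [List.mem_reverse, List.mem_map] at hz
    obtain ⟨a, ha, rfl⟩ := hz
    rcases hl a ha with h | h
    · exact Or.inr (by simpa using h)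
    · exact Or.inl h
  have := wordLength_le (l.map Inv.inv).reverse hw
  rw [← List.prod_inv_reverse, hp] at this
  simpa [hlen] using this

lemma wordLength_inv (hS : Subgroup.closure S = ⊤) (g : G) :
    wordLength S g⁻¹ = wordLength S g :=
  le_antisymm (wordLength_inv_le hS g)
    (by simpa using wordLength_inv_le hS g⁻¹)

lemma wordDist_self (g : G) : wordDist S g g = 0 := by
  simp [wordDist, wordLength_one]

lemma wordDist_comm (hS : Subgroup.closure S = ⊤) (g h : G) :
    wordDist S g h = wordDist S h g := by
  unfold wordDist
  rw [show h⁻¹ * g = (g⁻¹ * h)⁻¹ by group, wordLength_inv hS]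

lemma wordDist_triangle (hS : Subgroup.closure S = ⊤) (g h k : G) :
    wordDist S g k ≤ wordDist S g h + wordDist S h k := by
  unfold wordDist
  rw [← Nat.cast_add]
  exact_mod_cast (by
    rw [show g⁻¹ * k = (g⁻¹ * h) * (h⁻¹ * k) by group]
    exact wordLength_mul_le hS _ _)

lemma wordDist_nonneg (g h : G) : 0 ≤ wordDist S g h := Nat.cast_nonneg _

lemma wordDist_left_inv (k g h : G) : wordDist S (k * g) (k * h) = wordDist S g h := by
  unfold wordDist
  rw [show (k * g)⁻¹ * (k * h) = g⁻¹ * h by group]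

lemma wordDist_one_left (g : G) : wordDist S 1 g = (wordLength S g : ℝ) := by
  simp [wordDist]

end WordMetric
section WordMetric2

variable {G : Type*} [Group G] {S : Set G}

lemma isSWord_sublists {l l' : List G} (h : IsSWord S l) (hsub : ∀ x ∈ l', x ∈ l) :
    IsSWord S l' := fun x hx => h x (hsub x hx)

lemma word_lists_finite (hfin : S.Finite) (r : ℕ) :
    {l : List G | IsSWord S l ∧ l.length ≤ r}.Finite := by
  induction r with
  | zero =>
      apply Set.Finite.subset (Set.finite_singleton ([] : List G))
      rintro l ⟨-, hl⟩
      simp [List.length_eq_zero_iff.1 (Nat.le_zero.1 hl)]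
  | succ r ih =>
      have hSig : ({x : G | x ∈ S ∨ x⁻¹ ∈ S}).Finite := by
        have hsub : {x : G | x ∈ S ∨ x⁻¹ ∈ S} ⊆ S ∪ (Inv.inv '' S) := by
          rintro x (hx | hx)
          · exact Or.inl hx
          · exact Or.inr ⟨x⁻¹, hx, by simp⟩
        exact Set.Finite.subset (hfin.union (hfin.image _)) hsub
      apply Set.Finite.subset
        ((Set.finite_singleton ([] : List G)).union
          (Set.Finite.image (fun p : G × List G => p.1 :: p.2) (hSig.prod ih)))
      rintro l ⟨hw, hl⟩
      match l with
      | [] => exact Or.inl rfl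
      | a :: l' =>
          refine Or.inr ⟨⟨a, l'⟩, ⟨hw a (by simp), fun x hx => hw x (by simp [hx]), ?_⟩, rfl⟩
          simpa using Nat.succ_le_succ_iff.1 hl

lemma ball_finite (hfin : S.Finite) (hS : Subgroup.closure S = ⊤) (r : ℕ) :
    {g : G | wordLength S g ≤ r}.Finite := by
  apply Set.Finite.subset ((word_lists_finite hfin r).image List.prod)
  intro g hg
  simp only [Set.mem_setOf_eq] at hg
  obtain ⟨l, hl, hlen, hp⟩ := exists_min_word hS g
  exact ⟨l, ⟨hl, by omega⟩, hp⟩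

/-- Geodesic prefixes. -/
lemma exists_prefix (hS : Subgroup.closure S = ⊤) (g : G) (r : ℕ)
    (hr : r ≤ wordLength S g) :
    ∃ p : G, wordLength S p ≤ r ∧ wordLength S (p⁻¹ * g) + r ≤ wordLength S g := by
  obtain ⟨l, hl, hlen, hp⟩ := exists_min_word hS g
  refine ⟨(l.take r).prod, ?_, ?_⟩
  · calc wordLength S (l.take r).prod ≤ (l.take r).length :=
        wordLength_le _ (isSWord_sublists hl (fun x hx => List.mem_of_mem_take hx))
      _ ≤ r := by simp
  · have e2 : g = (l.take r).prod * (l.drop r).prod := by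
      rw [List.prod_take_mul_prod_drop, hp]
    have hdrop : ((l.take r).prod)⁻¹ * g = (l.drop r).prod := by rw [e2]; group
    rw [hdrop]
    have h1 : wordLength S (l.drop r).prod ≤ (l.drop r).length :=
      wordLength_le _ (isSWord_sublists hl (fun x hx => List.mem_of_mem_drop hx))
    have h2 : (l.drop r).length = l.length - r := by simp
    omega

/-- Discrete geodesic chain from 1 to g in the word metric. -/
lemma word_chain (hS : Subgroup.closure S = ⊤) (g : G) :
    ∃ (L : ℕ) (c : ℕ → G), c 0 = 1 ∧ (∀ i, L ≤ i → c i = g) ∧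
      (∀ i j : ℕ, wordDist S (c i) (c j) ≤ |(i : ℝ) - j|) ∧
      ((L : ℝ) ≤ wordDist S 1 g + 1) := by
  obtain ⟨l, hl, hlen, hp⟩ := exists_min_word hS g
  have key : ∀ i j : ℕ, i ≤ j →
      wordDist S ((l.take i).prod) ((l.take j).prod) ≤ ((j - i : ℕ) : ℝ) := by
    intro i j hij
    have e : l.take i ++ (l.take j).drop i = l.take j := by
      rw [show l.take i = (l.take j).take i by rw [List.take_take, min_eq_left hij]]
      exact List.take_append_drop i (l.take j)
    have e2 : (l.take j).prod = (l.take i).prod * ((l.take j).drop i).prod := by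
      rw [← List.prod_append, e]
    have heq : ((l.take i).prod)⁻¹ * (l.take j).prod = ((l.take j).drop i).prod := by
      rw [e2]; group
    unfold wordDist
    rw [heq]
    have h1 : wordLength S ((l.take j).drop i).prod ≤ ((l.take j).drop i).length :=
      wordLength_le _ (isSWord_sublists hl
        (fun x hx => List.mem_of_mem_take (List.mem_of_mem_drop hx)))
    have h2 : ((l.take j).drop i).length ≤ j - i := by
      rw [List.length_drop, List.length_take]; omega
    exact_mod_cast le_trans h1 h2
  refine ⟨l.length, fun i => (l.take i).prod, by simp, ?_, ?_, ?_⟩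
  · intro i hi; show (l.take i).prod = g; rw [List.take_of_length_le hi, hp]
  · intro i j
    show wordDist S ((l.take i).prod) ((l.take j).prod) ≤ |(i : ℝ) - j|
    rcases le_total i j with hij | hij
    · refine le_trans (key i j hij) ?_
      rw [abs_sub_comm, abs_of_nonneg (sub_nonneg.2 (Nat.cast_le.2 hij)), Nat.cast_sub hij]
    · rw [wordDist_comm hS]
      refine le_trans (key j i hij) ?_
      rw [abs_of_nonneg (sub_nonneg.2 (Nat.cast_le.2 hij)), Nat.cast_sub hij]
  · rw [wordDist_one_left, hlen]; linarith

end WordMetric2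
section GP

variable {X : Type*} {d : X → X → ℝ}

lemma dist_nonneg' (h0 : ∀ x, d x x = 0) (hsymm : ∀ x y, d x y = d y x)
    (htri : ∀ x y z, d x z ≤ d x y + d y z) (x y : X) : 0 ≤ d x y := by
  have := htri x y x
  rw [h0, hsymm y x] at this
  linarith

lemma gprod_comm (hsymm : ∀ x y, d x y = d y x) (o x y : X) :
    gprod d o x y = gprod d o y x := by
  unfold gprod; rw [hsymm x y]; ring

lemma gprod_base (hsymm : ∀ x y, d x y = d y x)
    (htri : ∀ x y z, d x z ≤ d x y + d y z) (o p x y : X) :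
    gprod d p x y - d p o ≤ gprod d o x y := by
  unfold gprod
  have h1 : d x p ≤ d x o + d o p := htri x o p
  have h2 : d y p ≤ d y o + d o p := htri y o p
  have h3 : d o p = d p o := hsymm o p
  linarith

lemma seqFellow_symm (hsymm : ∀ x y, d x y = d y x) {s t : ℕ → X}
    (h : SeqFellow d s t) : SeqFellow d t s := by
  intro o M
  obtain ⟨N, hN⟩ := h o M
  exact ⟨N, fun m n hm hn => by rw [gprod_comm hsymm]; exact hN n m hn hm⟩

lemma seqFellow_trans (hhyp : IsHypD d) {s t u : ℕ → X}
    (h1 : SeqFellow d s t) (h2 : SeqFellow d t u) : SeqFellow d s u := by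
  obtain ⟨δ, hδ, h4⟩ := hhyp
  intro o M
  obtain ⟨N₁, hN₁⟩ := h1 o (M + δ)
  obtain ⟨N₂, hN₂⟩ := h2 o (M + δ)
  refine ⟨max N₁ N₂, fun m n hm hn => ?_⟩
  have ha := hN₁ m (max N₁ N₂) (le_trans (le_max_left _ _) hm) (le_max_left _ _)
  have hb := hN₂ (max N₁ N₂) n (le_max_right _ _) (le_trans (le_max_right _ _) hn)
  have hmin := h4 o (s m) (t (max N₁ N₂)) (u n)
  have : M + δ ≤ min (gprod d o (s m) (t (max N₁ N₂))) (gprod d o (t (max N₁ N₂)) (u n)) :=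
    le_min ha hb
  linarith [le_trans this hmin]

lemma fellow_of_bdry_eq (hsymm : ∀ x y, d x y = d y x) (hhyp : IsHypD d)
    {s t : BdryPre d} (h : Bdry.mk s = Bdry.mk t) : SeqFellow d s.1 t.1 := by
  have h' := Quot.eqvGen_exact h
  clear h
  induction h' with
  | rel a b hab => exact hab
  | refl a => exact a.2
  | symm a b _ ih => exact seqFellow_symm hsymm ih
  | trans a b c _ _ ih1 ih2 => exact seqFellow_trans hhyp ih1 ih2

end GP
section Chain

variable {X : Type*} {d : X → X → ℝ}

lemma gprod_ge_of_far
    (h0 : ∀ x, d x x = 0) (hsymm : ∀ x y, d x y = d y x)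
    (htri : ∀ x y z, d x z ≤ d x y + d y z)
    (δ : ℝ) (hδ : 0 ≤ δ)
    (h4 : ∀ o x y z : X, min (gprod d o x y) (gprod d o y z) ≤ gprod d o x z + δ)
    (c : ℕ → X) (L : ℕ) (u v : X)
    (hc0 : c 0 = u) (hcL : c L = v)
    (hlip : ∀ i j : ℕ, d (c i) (c j) ≤ |(i : ℝ) - j|)
    (hlen : (L : ℝ) ≤ d u v + 1)
    (z : X) (D : ℝ) (hfar : ∀ i, D ≤ d z (c i)) :
    D - (2 * δ + 3) ≤ gprod d z u v := by
  classical
  by_contra hlt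
  push_neg at hlt
  set P := gprod d z u v with hP
  set A : ℕ → ℝ := fun i => gprod d z u (c i) with hA
  set B : ℕ → ℝ := fun i => gprod d z (c i) v with hB
  set f : ℕ → ℝ := fun i => A i - B i with hf
  have hfar' : ∀ i, D ≤ d (c i) z := fun i => by rw [← hsymm]; exact hfar i
  have hf0 : f 0 = d u z - P := by
    simp only [hf, hA, hB, hc0]
    rw [hP]; unfold gprod; rw [h0 u]; ring
  have hfL : f L = P - d v z := by
    simp only [hf, hA, hB, hcL]
    rw [hP]; unfold gprod; rw [h0 v]; ring
  have hDP : 2 * δ + 3 < d u z - P := by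
    have h := hfar' 0; rw [hc0] at h; linarith
  have hfLneg : f L ≤ 0 := by
    rw [hfL]
    have h := hfar' L; rw [hcL] at h; linarith
  have hex : ∃ i, f i ≤ 0 := ⟨L, hfLneg⟩
  set i₀ := Nat.find hex with hi₀
  have hspec : f i₀ ≤ 0 := Nat.find_spec hex
  have hi₀pos : 0 < i₀ := by
    rcases Nat.eq_zero_or_pos i₀ with h | h
    · exfalso; rw [h, hf0] at hspec; linarith
    · exact h
  have hi₀L : i₀ ≤ L := Nat.find_min' hex hfLneg
  set i := i₀ - 1 with hi
  have hii : i + 1 = i₀ := Nat.succ_pred_eq_of_pos hi₀pos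
  have hfi : 0 < f i := by
    have h := Nat.find_min hex (m := i) (by omega)
    push_neg at h
    exact h
  have hfi1 : f (i + 1) ≤ 0 := by rw [hii]; exact hspec
  have hiL : i < L := by omega
  have hstep1 : d (c i) (c (i + 1)) ≤ 1 := by
    have h := hlip i (i + 1)
    have he : |(i : ℝ) - ((i + 1 : ℕ) : ℝ)| = 1 := by
      push_cast
      rw [show (i : ℝ) - ((i : ℝ) + 1) = -1 by ring, abs_neg, abs_one]
    rwa [he] at h
  -- step bounds
  have hAB : ∀ j, A j = (d u z + d (c j) z - d u (c j)) / 2 := fun j => rfl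
  have hBB : ∀ j, B j = (d (c j) z + d v z - d (c j) v) / 2 := fun j => rfl
  have hfstep : f i ≤ f (i + 1) + 2 := by
    have t1 : d (c i) z ≤ d (c i) (c (i + 1)) + d (c (i + 1)) z := htri _ _ _
    have t2 : d u (c (i + 1)) ≤ d u (c i) + d (c i) (c (i + 1)) := htri _ _ _
    have t3 : d (c (i + 1)) z ≤ d (c (i + 1)) (c i) + d (c i) z := htri _ _ _
    have t4 : d (c i) v ≤ d (c i) (c (i + 1)) + d (c (i + 1)) v := htri _ _ _
    have t5 : d (c (i + 1)) (c i) = d (c i) (c (i + 1)) := hsymm _ _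
    simp only [hf, hAB, hBB] at *
    linarith
  have hfi2 : f i ≤ 2 := by linarith
  -- four point
  have h4' := h4 z u (c i) v
  have hBmin : B i ≤ P + δ := by
    have hABi : min (A i) (B i) = B i := min_eq_right (by simp only [hf] at hfi; linarith)
    have h5 : min (A i) (B i) ≤ P + δ := h4'
    rwa [hABi] at h5
  have hAi : A i ≤ 2 + P + δ := by
    have : A i = f i + B i := by simp only [hf]; ring
    linarith
  -- sum bound
  have hsum : P + D - 1 ≤ A i + B i := by
    have e1 : d u (c i) ≤ (i : ℝ) := by
      have h := hlip 0 i
      rw [hc0] at h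
      simpa using h
    have e2 : d (c i) v ≤ (L : ℝ) - i := by
      have h := hlip i L
      rw [hcL] at h
      rwa [abs_sub_comm, abs_of_nonneg (sub_nonneg.2 (Nat.cast_le.2 hiL.le))] at h
    have e3 : D ≤ d (c i) z := hfar' i
    have : A i + B i = P + d (c i) z - (d u (c i) + d (c i) v - d u v) / 2 := by
      simp only [hAB, hBB, hP]; unfold gprod; ring
    rw [this]
    have : d u (c i) + d (c i) v - d u v ≤ 1 := by linarith
    linarith
  linarith

end Chain
section Count

open Finset in
lemma exists_far_point {G : Type*} [Group G] {X : Type*} (S : Set G)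
    (hgen : Subgroup.closure S = ⊤)
    (d : X → X → ℝ) (hsymm : ∀ x y, d x y = d y x)
    (htri : ∀ x y z, d x z ≤ d x y + d y z)
    (f : G → X) (hinv : ∀ k g h : G, d (f (k * g)) (f (k * h)) = d (f g) (f h))
    (g : G) (L : ℕ) (c : ℕ → X)
    (hcL : ∀ j, L ≤ j → c j = f g)
    (M : ℝ) (K : ℕ)
    (hK : ∀ a : G, d (f 1) (f a) ≤ 2 * M → wordLength S a ≤ K)
    (hn : (L + 1) * (K + 1) < wordLength S g + 1) :
    ∃ (i : ℕ) (p : G), i ≤ wordLength S g ∧ wordLength S p ≤ i ∧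
      wordLength S (p⁻¹ * g) + i ≤ wordLength S g ∧ ∀ j, M < d (f p) (c j) := by
  classical
  set n := wordLength S g with hn'
  by_contra hcon
  push_neg at hcon
  -- prefix family
  have hpre : ∀ i : Fin (n + 1), ∃ p : G,
      wordLength S p ≤ (i : ℕ) ∧ wordLength S (p⁻¹ * g) + (i : ℕ) ≤ n :=
    fun i => exists_prefix hgen g i (by omega)
  choose p hp1 hp2 using hpre
  -- near points
  have hj : ∀ i : Fin (n + 1), ∃ j : Fin (L + 1), d (f (p i)) (c (j : ℕ)) ≤ M := by
    intro i
    obtain ⟨j, hj⟩ := hcon (i : ℕ) (p i) (by omega) (hp1 i) (hp2 i)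
    rcases le_or_gt j L with h | h
    · exact ⟨⟨j, by omega⟩, hj⟩
    · refine ⟨⟨L, by omega⟩, ?_⟩
      have : c j = c L := by rw [hcL j h.le, hcL L le_rfl]
      rw [← this]
      exact hj
  choose F hF using hj
  -- fiber bound
  have hfiber : ∀ j0 : Fin (L + 1),
      (univ.filter fun i => F i = j0).card ≤ K + 1 := by
    intro j0
    set s := univ.filter fun i => F i = j0 with hs
    rcases s.eq_empty_or_nonempty with he | hne
    · rw [he]; simp
    · set a := s.min' hne with ha
      have haM : ∀ i ∈ s, d (f (p a)) (f (p i)) ≤ 2 * M := by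
        intro i hi
        have hFi : F i = j0 := by simpa [hs] using hi
        have hFa : F a = j0 := by
          have := s.min'_mem hne
          simpa [hs] using this
        have h1 := hF a
        have h2 := hF i
        rw [hFa] at h1
        rw [hFi] at h2
        calc d (f (p a)) (f (p i)) ≤ d (f (p a)) (c (j0 : ℕ)) + d (c (j0 : ℕ)) (f (p i)) :=
              htri _ _ _
          _ ≤ M + M := add_le_add h1 (by rw [hsymm]; exact h2)
          _ = 2 * M := by ring
      have hwl : ∀ i ∈ s, wordLength S ((p a)⁻¹ * p i) ≤ K := by
        intro i hi
        apply hK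
        have := hinv (p a) 1 ((p a)⁻¹ * p i)
        rw [mul_one, show p a * ((p a)⁻¹ * p i) = p i by group] at this
        rw [← this]
        exact haM i hi
      have hile : ∀ i ∈ s, (i : ℕ) ≤ (a : ℕ) + K := by
        intro i hi
        have hdec : g = p a * ((p a)⁻¹ * p i) * ((p i)⁻¹ * g) := by group
        have h1 : wordLength S g ≤
            wordLength S (p a * ((p a)⁻¹ * p i)) + wordLength S ((p i)⁻¹ * g) := by
          conv_lhs => rw [hdec]
          exact wordLength_mul_le hgen _ _
        have h2 : wordLength S (p a * ((p a)⁻¹ * p i)) ≤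
            wordLength S (p a) + wordLength S ((p a)⁻¹ * p i) :=
          wordLength_mul_le hgen _ _
        have h3 := hp1 a
        have h4 := hp2 i
        have h5 := hwl i hi
        omega
      have hage : ∀ i ∈ s, (a : ℕ) ≤ (i : ℕ) := fun i hi => s.min'_le i hi
      have hsub : s.image Fin.val ⊆ Finset.Icc (a : ℕ) ((a : ℕ) + K) := by
        intro m hm
        simp only [Finset.mem_image] at hm
        obtain ⟨i, hi, rfl⟩ := hm
        exact Finset.mem_Icc.2 ⟨hage i hi, hile i hi⟩
      have hcard : s.card = (s.image Fin.val).card :=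
        (Finset.card_image_of_injective s Fin.val_injective).symm
      rw [hcard]
      calc (s.image Fin.val).card ≤ (Finset.Icc (a : ℕ) ((a : ℕ) + K)).card :=
            Finset.card_le_card hsub
        _ = K + 1 := by rw [Nat.card_Icc]; omega
  -- total count
  have htot : (n + 1) ≤ (L + 1) * (K + 1) := by
    have h1 : (univ : Finset (Fin (n + 1))).card =
        ∑ j0 ∈ (univ : Finset (Fin (L + 1))),
          (univ.filter fun i => F i = j0).card :=
      Finset.card_eq_sum_card_fiberwise (fun x _ => Finset.mem_univ (F x))
    have h2 : ∑ j0 ∈ (univ : Finset (Fin (L + 1))),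
        (univ.filter fun i => F i = j0).card ≤ (L + 1) * (K + 1) := by
      calc ∑ j0 ∈ (univ : Finset (Fin (L + 1))), (univ.filter fun i => F i = j0).card
          ≤ (univ : Finset (Fin (L + 1))).card * (K + 1) :=
            Finset.sum_le_card_nsmul _ _ _ (fun j0 _ => hfiber j0)
        _ = (L + 1) * (K + 1) := by rw [Finset.card_univ, Fintype.card_fin]
    have h3 : (univ : Finset (Fin (n + 1))).card = n + 1 := by
      rw [Finset.card_univ, Fintype.card_fin]
    omega
  omega

end Count
section Lip

variable {G : Type*} [Group G] {X : Type*}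

lemma lipschitz_of_word (S : Set G) (hfin : S.Finite)
    (hgen : Subgroup.closure S = ⊤)
    (d : X → X → ℝ) (h0 : ∀ x, d x x = 0)
    (htri : ∀ x y z, d x z ≤ d x y + d y z)
    (f : G → X) (hinv : ∀ k g h : G, d (f (k * g)) (f (k * h)) = d (f g) (f h)) :
    ∃ C : ℝ, 1 ≤ C ∧ ∀ g h : G, d (f g) (f h) ≤ C * wordDist S g h := by
  have hSig : ({x : G | x ∈ S ∨ x⁻¹ ∈ S}).Finite := by
    have hsub : {x : G | x ∈ S ∨ x⁻¹ ∈ S} ⊆ S ∪ (Inv.inv '' S) := by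
      rintro x (hx | hx)
      · exact Or.inl hx
      · exact Or.inr ⟨x⁻¹, hx, by simp⟩
    exact Set.Finite.subset (hfin.union (hfin.image _)) hsub
  obtain ⟨C₀, hC₀⟩ := (hSig.image (fun s => d (f 1) (f s))).bddAbove
  set C := max 1 C₀ with hC
  have hC1 : (1 : ℝ) ≤ C := le_max_left _ _
  have hCgen : ∀ a : G, (a ∈ S ∨ a⁻¹ ∈ S) → d (f 1) (f a) ≤ C := by
    intro a ha
    exact le_trans (hC₀ ⟨a, ha, rfl⟩) (le_max_right _ _)
  have key : ∀ l : List G, IsSWord S l → ∀ g : G,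
      d (f g) (f (g * l.prod)) ≤ C * l.length := by
    intro l
    induction l with
    | nil =>
        intro _ g
        simp [h0]
    | cons a l ih =>
        intro hw g
        have ha : a ∈ S ∨ a⁻¹ ∈ S := hw a (by simp)
        have hw' : IsSWord S l := fun x hx => hw x (by simp [hx])
        have h1 : d (f g) (f (g * a)) ≤ C := by
          have h1' := hinv g 1 a
          rw [mul_one] at h1'
          rw [h1']
          exact hCgen a ha
        have h2 : d (f (g * a)) (f ((g * a) * l.prod)) ≤ C * l.length := ih hw' (g * a)
        have h3 : g * (a :: l).prod = (g * a) * l.prod := by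
          rw [List.prod_cons]; group
        rw [h3]
        calc d (f g) (f ((g * a) * l.prod))
            ≤ d (f g) (f (g * a)) + d (f (g * a)) (f ((g * a) * l.prod)) := htri _ _ _
          _ ≤ C + C * l.length := add_le_add h1 h2
          _ = C * (l.length + 1) := by ring
          _ = C * (a :: l).length := by push_cast [List.length_cons]; ring
  refine ⟨C, hC1, fun g h => ?_⟩
  obtain ⟨l, hl, hlen, hp⟩ := exists_min_word hgen (g⁻¹ * h)
  have hgh : h = g * l.prod := by rw [hp]; group
  have hkey := key l hl g
  rw [← hgh] at hkey
  unfold wordDist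
  rw [← hlen]
  exact hkey

lemma proper_bound' (S : Set G) (d : X → X → ℝ) (f : G → X)
    (hproper : ∀ R : ℝ, {g : G | d (f 1) (f g) ≤ R}.Finite) (R : ℝ) :
    ∃ K : ℕ, ∀ g : G, d (f 1) (f g) ≤ R → wordLength S g ≤ K := by
  obtain ⟨K, hK⟩ := ((hproper R).image (wordLength S)).bddAbove
  exact ⟨K, fun g hg => hK ⟨g, hg, rfl⟩⟩

end Lip
section Pair

variable {G : Type*} [Group G] {X : Type*}

lemma exists_separated_pair (S : Set G) (hfin : S.Finite)
    (hgen : Subgroup.closure S = ⊤)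
    (d : X → X → ℝ) (h0 : ∀ x, d x x = 0) (hsymm : ∀ x y, d x y = d y x)
    (htri : ∀ x y z, d x z ≤ d x y + d y z)
    (δ : ℝ) (hδ : 0 ≤ δ)
    (h4 : ∀ o x y z : X, min (gprod d o x y) (gprod d o y z) ≤ gprod d o x z + δ)
    (f : G → X) (hinv : ∀ k g h : G, d (f (k * g)) (f (k * h)) = d (f g) (f h))
    (hproper : ∀ R : ℝ, {g : G | d (f 1) (f g) ≤ R}.Finite)
    (hchain : ∀ g : G, ∃ (L : ℕ) (c : ℕ → X), c 0 = f 1 ∧ (∀ i, L ≤ i → c i = f g) ∧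
      (∀ i j : ℕ, d (c i) (c j) ≤ |(i : ℝ) - j|) ∧ ((L : ℝ) ≤ d (f 1) (f g) + 1))
    (hnotqi : ¬ IsQIEmbD (wordDist S) d f) (M : ℕ) :
    ∃ b c : G, M ≤ wordLength S b ∧ M ≤ wordLength S c ∧
      gprod (wordDist S) 1 b c ≤ 0 ∧ (M : ℝ) ≤ gprod d (f 1) (f b) (f c) := by
  obtain ⟨C, hC1, hLip⟩ := lipschitz_of_word S hfin hgen d h0 htri f hinv
  have hCpos : (0 : ℝ) < C := lt_of_lt_of_le one_pos hC1
  set M'' : ℝ := C * ((M : ℝ) + 2 * δ + 4) with hM''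
  have hM''base : (0 : ℝ) ≤ (M : ℝ) + 2 * δ + 4 := by positivity
  have hM''1 : (M : ℝ) + 2 * δ + 4 ≤ M'' := by nlinarith
  have hM''CM : C * (M : ℝ) + 1 ≤ M'' := by nlinarith
  obtain ⟨K, hK⟩ := proper_bound' S d f hproper (2 * M'')
  have hKR : (0 : ℝ) ≤ (K : ℝ) := Nat.cast_nonneg K
  set k : ℝ := C + 2 * ((K : ℝ) + 1) + 2 with hk
  have hkC : C ≤ k := by linarith
  have hk1 : (1 : ℝ) ≤ k := le_trans hC1 hkC
  have hkpos : (0 : ℝ) < k := lt_of_lt_of_le one_pos hk1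
  -- extract a distorted element
  rw [IsQIEmbD] at hnotqi
  push_neg at hnotqi
  have hbad := hnotqi k hk1
  rw [IsQIEmbWith] at hbad
  push_neg at hbad
  obtain ⟨y, y', hyy⟩ := hbad
  have hlow : d (f y) (f y') < wordDist S y y' / k - k := by
    by_contra hcontra
    push_neg at hcontra
    have hub := hyy hcontra
    have h1 : d (f y) (f y') ≤ C * wordDist S y y' := hLip y y'
    have h2 : C * wordDist S y y' ≤ k * wordDist S y y' + k :=
      le_trans (mul_le_mul_of_nonneg_right hkC (wordDist_nonneg y y')) (by linarith)
    linarith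
  set g := y⁻¹ * y' with hgdef
  have hR : d (f 1) (f g) = d (f y) (f y') := by
    have h := hinv y 1 g
    rw [mul_one, hgdef, show y * (y⁻¹ * y') = y' by group] at h
    exact h.symm
  set R := d (f 1) (f g) with hRdef
  set n := wordLength S g with hn
  have hR0 : (0 : ℝ) ≤ R := dist_nonneg' h0 hsymm htri _ _
  have hwdyy : wordDist S y y' = (n : ℝ) := rfl
  have hlow' : R < (n : ℝ) / k - k := by rw [hR, hwdyy] at *; exact hlow
  have hnk : k * R + k * k < (n : ℝ) := by
    have h1 : R + k < (n : ℝ) / k := by linarith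
    have h2 : (R + k) * k < (n : ℝ) := by
      rw [← lt_div_iff₀ hkpos]
      exact h1
    nlinarith
  obtain ⟨L, c, hc0, hcL, hlip, hlen⟩ := hchain g
  have hcount : (L + 1) * (K + 1) < n + 1 := by
    have hLR : (L : ℝ) ≤ R + 1 := hlen
    have hA : ((L : ℝ) + 1) * ((K : ℝ) + 1) ≤ (R + 2) * ((K : ℝ) + 1) := by nlinarith
    have hB : (R + 2) * ((K : ℝ) + 1) ≤ k * R + k * k := by nlinarith
    have hreal : ((L : ℝ) + 1) * ((K : ℝ) + 1) < (n : ℝ) + 1 := by linarith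
    exact_mod_cast hreal
  obtain ⟨i, p, hin, hpi, hpig, hfar⟩ :=
    exists_far_point S hgen d hsymm htri f hinv g L c hcL M'' K hK hcount
  set b := p⁻¹ with hb
  set c' := p⁻¹ * g with hc'
  have e1 : d (f b) (f 1) = d (f 1) (f p) := by
    have h := hinv p p⁻¹ 1
    rw [show p * p⁻¹ = 1 by group, mul_one] at h
    exact h.symm
  have e2 : d (f c') (f 1) = d (f g) (f p) := by
    have h := hinv p (p⁻¹ * g) 1
    rw [show p * (p⁻¹ * g) = g by group, mul_one] at h
    exact h.symm
  have e3 : d (f b) (f c') = d (f 1) (f g) := by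
    have h := hinv p p⁻¹ (p⁻¹ * g)
    rw [show p * p⁻¹ = 1 by group, show p * (p⁻¹ * g) = g by group] at h
    exact h.symm
  have hgpeq : gprod d (f 1) (f b) (f c') = gprod d (f p) (f 1) (f g) := by
    unfold gprod
    rw [e1, e2, e3]
  have hfar' : ∀ j : ℕ, M'' ≤ d (f p) (c j) := fun j => (hfar j).le
  have hgpX : M'' - (2 * δ + 3) ≤ gprod d (f p) (f 1) (f g) :=
    gprod_ge_of_far h0 hsymm htri δ hδ h4 c L (f 1) (f g) hc0 (hcL L le_rfl) hlip
      (by linarith) (f p) M'' hfar'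
  have hd1p : M'' < d (f 1) (f p) := by
    have h := hfar 0
    rw [hc0] at h
    rw [hsymm]
    exact h
  have hdpg : M'' < d (f p) (f g) := by
    have h := hfar L
    rw [hcL L le_rfl] at h
    exact h
  have hwlp : M < wordLength S p := by
    have h1 : d (f 1) (f p) ≤ C * wordDist S 1 p := hLip 1 p
    rw [wordDist_one_left] at h1
    have h2 : C * (M : ℝ) < C * (wordLength S p : ℝ) := by linarith
    have h3 : (M : ℝ) < (wordLength S p : ℝ) := lt_of_mul_lt_mul_left h2 hCpos.le
    exact_mod_cast h3
  have hwb : M ≤ wordLength S b := by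
    rw [hb, wordLength_inv hgen]
    omega
  have hwc : M ≤ wordLength S c' := by
    have h1 : d (f p) (f g) ≤ C * wordDist S p g := hLip p g
    have h2 : wordDist S p g = (wordLength S c' : ℝ) := rfl
    rw [h2] at h1
    have h3 : C * (M : ℝ) < C * (wordLength S c' : ℝ) := by linarith
    have h4' : (M : ℝ) < (wordLength S c' : ℝ) := lt_of_mul_lt_mul_left h3 hCpos.le
    have : M < wordLength S c' := by exact_mod_cast h4'
    omega
  have hgpG : gprod (wordDist S) 1 b c' ≤ 0 := by
    have h1 : wordDist S b 1 = (wordLength S p : ℝ) := by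
      show (wordLength S (b⁻¹ * 1) : ℝ) = _
      rw [show b⁻¹ * 1 = p by rw [hb]; group]
    have h2 : wordDist S c' 1 = (wordLength S c' : ℝ) := by
      rw [wordDist_comm hgen, wordDist_one_left]
    have h3 : wordDist S b c' = (n : ℝ) := by
      show (wordLength S (b⁻¹ * c') : ℝ) = _
      rw [show b⁻¹ * c' = g by rw [hb, hc']; group]
    unfold gprod
    rw [h1, h2, h3]
    have c1 : (wordLength S p : ℝ) ≤ (i : ℝ) := by exact_mod_cast hpi
    have c2 : (wordLength S c' : ℝ) + (i : ℝ) ≤ (n : ℝ) := by exact_mod_cast hpig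
    linarith
  refine ⟨b, c', hwb, hwc, hgpG, ?_⟩
  rw [hgpeq]
  linarith

end Pair
section Ultra

lemma ultra_const {α : Type*} (U : Ultrafilter ℕ) {V : Set α} (hV : V.Finite)
    (q : ℕ → α) (hq : ∀ k, q k ∈ V) : ∃ v, {k | q k = v} ∈ U := by
  have hmem : V ∈ U.map q := by
    rw [Ultrafilter.mem_map]
    have h : q ⁻¹' V = Set.univ := Set.eq_univ_of_forall hq
    rw [h]
    exact Filter.univ_mem
  obtain ⟨v, hv, hpure⟩ := Ultrafilter.eq_pure_of_finite_mem hV hmem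
  refine ⟨v, ?_⟩
  have h2 : {v} ∈ U.map q := by
    rw [hpure]
    exact Filter.mem_pure.2 rfl
  rw [Ultrafilter.mem_map] at h2
  have h3 : q ⁻¹' {v} = {k | q k = v} := by ext; simp
  rwa [h3] at h2

variable {G : Type*} [Group G] {S : Set G}

lemma gprod_ge_common_prefix (hgen : Subgroup.closure S = ⊤) {v b1 b2 : G} {r : ℕ}
    (h1 : wordLength S (v⁻¹ * b1) + r ≤ wordLength S b1)
    (h2 : wordLength S (v⁻¹ * b2) + r ≤ wordLength S b2) :
    (r : ℝ) ≤ gprod (wordDist S) 1 b1 b2 := by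
  have e1 : wordDist S b1 1 = (wordLength S b1 : ℝ) := by
    rw [wordDist_comm hgen, wordDist_one_left]
  have e2 : wordDist S b2 1 = (wordLength S b2 : ℝ) := by
    rw [wordDist_comm hgen, wordDist_one_left]
  have e3 : wordDist S b1 b2 ≤ (wordLength S (v⁻¹ * b1) : ℝ) + (wordLength S (v⁻¹ * b2) : ℝ) := by
    have hd : wordLength S (b1⁻¹ * b2) ≤ wordLength S (b1⁻¹ * v) + wordLength S (v⁻¹ * b2) := by
      have : b1⁻¹ * b2 = (b1⁻¹ * v) * (v⁻¹ * b2) := by group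
      rw [this]
      exact wordLength_mul_le hgen _ _
    have hiv : wordLength S (b1⁻¹ * v) = wordLength S (v⁻¹ * b1) := by
      rw [show b1⁻¹ * v = (v⁻¹ * b1)⁻¹ by group, wordLength_inv hgen]
    unfold wordDist
    rw [← Nat.cast_add]
    exact_mod_cast (hiv ▸ hd)
  unfold gprod
  rw [e1, e2]
  have c1 : ((wordLength S (v⁻¹ * b1) : ℕ) : ℝ) + r ≤ (wordLength S b1 : ℝ) := by
    exact_mod_cast h1
  have c2 : ((wordLength S (v⁻¹ * b2) : ℕ) : ℝ) + r ≤ (wordLength S b2 : ℝ) := by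
    exact_mod_cast h2
  linarith

end Ultra
section Key

set_option maxHeartbeats 2000000 in
theorem key_lemma {G : Type*} [Group G] {X : Type*} (S : Set G) (hfin : S.Finite)
    (hgen : Subgroup.closure S = ⊤) (hGhyp : IsHypD (wordDist S))
    (d : X → X → ℝ) (h0 : ∀ x, d x x = 0) (hsymm : ∀ x y, d x y = d y x)
    (htri : ∀ x y z, d x z ≤ d x y + d y z) (hXhyp : IsHypD d)
    (f : G → X) (hinv : ∀ k g h : G, d (f (k * g)) (f (k * h)) = d (f g) (f h))
    (hproper : ∀ R : ℝ, {g : G | d (f 1) (f g) ≤ R}.Finite)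
    (hchain : ∀ g : G, ∃ (L : ℕ) (c : ℕ → X), c 0 = f 1 ∧ (∀ i, L ≤ i → c i = f g) ∧
      (∀ i j : ℕ, d (c i) (c j) ≤ |(i : ℝ) - j|) ∧ ((L : ℝ) ≤ d (f 1) (f g) + 1))
    (bh : Bdry (wordDist S) → Bdry d)
    (hCT : IsCTMapD (wordDist S) d f bh)
    (hnotqi : ¬ IsQIEmbD (wordDist S) d f) :
    ∃ ξ₁ ξ₂ : Bdry (wordDist S), ξ₁ ≠ ξ₂ ∧ bh ξ₁ = bh ξ₂ := by
  classical
  obtain ⟨δX, hδX, h4X⟩ := hXhyp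
  have hsymmG : ∀ x y : G, wordDist S x y = wordDist S y x := wordDist_comm hgen
  have htriG : ∀ x y z : G, wordDist S x z ≤ wordDist S x y + wordDist S y z :=
    wordDist_triangle hgen
  -- separated pairs
  have hpairs := fun M =>
    exists_separated_pair S hfin hgen d h0 hsymm htri δX hδX h4X f hinv hproper hchain
      hnotqi M
  choose b c hwb hwc hbc hgX using hpairs
  -- prefix choices
  have hpre : ∀ (a : G) (r : ℕ), r ≤ wordLength S a →
      ∃ p : G, wordLength S p ≤ r ∧ wordLength S (p⁻¹ * a) + r ≤ wordLength S a :=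
    fun a r h => exists_prefix hgen a r h
  set Qb : ℕ → ℕ → G := fun r k =>
    if h : r ≤ wordLength S (b k) then (hpre (b k) r h).choose else 1 with hQb
  set Qc : ℕ → ℕ → G := fun r k =>
    if h : r ≤ wordLength S (c k) then (hpre (c k) r h).choose else 1 with hQc
  have hQbmem : ∀ r k, Qb r k ∈ {v : G | wordLength S v ≤ r} := by
    intro r k
    simp only [hQb, Set.mem_setOf_eq]
    by_cases h : r ≤ wordLength S (b k)
    · rw [dif_pos h]
      exact ((hpre (b k) r h).choose_spec).1
    · rw [dif_neg h, wordLength_one]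
      exact Nat.zero_le r
  have hQcmem : ∀ r k, Qc r k ∈ {v : G | wordLength S v ≤ r} := by
    intro r k
    simp only [hQc, Set.mem_setOf_eq]
    by_cases h : r ≤ wordLength S (c k)
    · rw [dif_pos h]
      exact ((hpre (c k) r h).choose_spec).1
    · rw [dif_neg h, wordLength_one]
      exact Nat.zero_le r
  set U : Ultrafilter ℕ := Filter.hyperfilter ℕ with hU
  have hvb := fun r => ultra_const U (ball_finite hfin hgen r) (Qb r) (hQbmem r)
  have hvc := fun r => ultra_const U (ball_finite hfin hgen r) (Qc r) (hQcmem r)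
  choose vb hvbU using hvb
  choose vc hvcU using hvc
  -- good sets
  set T : ℕ → Set ℕ := fun r =>
    {k | Qb r k = vb r} ∩ {k | Qc r k = vc r} ∩ {k | r ≤ k} with hT
  have hTU : ∀ r, T r ∈ U := by
    intro r
    refine Filter.inter_mem (Filter.inter_mem (hvbU r) (hvcU r)) ?_
    have hfin' : {k : ℕ | r ≤ k}ᶜ.Finite := by
      have : {k : ℕ | r ≤ k}ᶜ = Set.Iio r := by ext m; simp
      rw [this]
      exact Set.finite_Iio r
    have := Filter.compl_mem_hyperfilter_of_finite hfin'
    rwa [compl_compl] at this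
  set W : ℕ → Set ℕ := fun j => ⋂ r ∈ Finset.range (j + 1), T r with hW
  have hWU : ∀ j, W j ∈ U := by
    intro j
    exact (Filter.biInter_mem (Finset.range (j + 1)).finite_toSet).2 fun r _ => hTU r
  have hWinf : ∀ j, (W j).Infinite := by
    intro j
    by_contra hcon
    rw [Set.not_infinite] at hcon
    exact Filter.notMem_hyperfilter_of_finite hcon (hWU j)
  have hnext : ∀ (j m : ℕ), ∃ m', m < m' ∧ m' ∈ W j := by
    intro j m
    by_contra hcon
    push_neg at hcon
    have hsub : W j ⊆ Set.Iic m := by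
      intro k hk
      by_contra hk'
      exact hcon k (not_le.1 hk') hk
    exact absurd ((Set.finite_Iic m).subset hsub) (hWinf j)
  choose nxt hnxt1 hnxt2 using hnext
  set kap : ℕ → ℕ := fun j => Nat.rec (nxt 0 0) (fun j' ih => nxt (j' + 1) ih) j with hkap
  have hkapW : ∀ j, kap j ∈ W j := by
    intro j
    cases j with
    | zero => exact hnxt2 0 0
    | succ j' => exact hnxt2 (j' + 1) (kap j')
  have hkapmono : ∀ j, kap j < kap (j + 1) := fun j => hnxt1 (j + 1) (kap j)
  have hkapge : ∀ j, j ≤ kap j := by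
    intro j
    induction j with
    | zero => exact Nat.zero_le _
    | succ j' ih => exact Nat.succ_le_of_lt (lt_of_le_of_lt ih (hkapmono j'))
  have hmemT : ∀ r j, r ≤ j → kap j ∈ T r := by
    intro r j hrj
    have := hkapW j
    rw [hW] at this
    simp only [Set.mem_iInter] at this
    exact this r (Finset.mem_range.2 (by omega))
  -- the two sequences
  set s : ℕ → G := fun j => b (kap j) with hs
  set t : ℕ → G := fun j => c (kap j) with ht
  -- prefix facts
  have hbfact : ∀ r j, r ≤ j →
      wordLength S ((vb r)⁻¹ * s j) + r ≤ wordLength S (s j) := by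
    intro r j hrj
    obtain ⟨⟨h1, h2⟩, h3⟩ := hmemT r j hrj
    simp only [Set.mem_setOf_eq] at h1 h3
    have hrk : r ≤ wordLength S (b (kap j)) := le_trans (le_trans hrj (hkapge j)) (hwb (kap j))
    have hQ : Qb r (kap j) = (hpre (b (kap j)) r hrk).choose := by
      simp only [hQb]
      rw [dif_pos hrk]
    rw [hQ] at h1
    have hspec := (hpre (b (kap j)) r hrk).choose_spec.2
    rw [h1] at hspec
    exact hspec
  have hcfact : ∀ r j, r ≤ j →
      wordLength S ((vc r)⁻¹ * t j) + r ≤ wordLength S (t j) := by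
    intro r j hrj
    obtain ⟨⟨h1, h2⟩, h3⟩ := hmemT r j hrj
    simp only [Set.mem_setOf_eq] at h2 h3
    have hrk : r ≤ wordLength S (c (kap j)) := le_trans (le_trans hrj (hkapge j)) (hwc (kap j))
    have hQ : Qc r (kap j) = (hpre (c (kap j)) r hrk).choose := by
      simp only [hQc]
      rw [dif_pos hrk]
    rw [hQ] at h2
    have hspec := (hpre (c (kap j)) r hrk).choose_spec.2
    rw [h2] at hspec
    exact hspec
  have hbc' : ∀ N, gprod (wordDist S) 1 (s N) (t N) ≤ 0 := fun N => hbc (kap N)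
  have hgX' : ∀ n, ((kap n : ℕ) : ℝ) ≤ gprod d (f 1) (f (s n)) (f (t n)) := fun n => hgX (kap n)
  clear_value Qb Qc U T W kap s t
  -- SeqToInf
  have hsinf : SeqToInf (wordDist S) s := by
    intro o M
    set r := ⌈M + wordDist S 1 o⌉₊ with hr
    refine ⟨r, fun m n hm hn => ?_⟩
    have g1 : (r : ℝ) ≤ gprod (wordDist S) 1 (s m) (s n) :=
      gprod_ge_common_prefix hgen (hbfact r m hm) (hbfact r n hn)
    have g2 := gprod_base hsymmG htriG o 1 (s m) (s n)
    have g3 : M + wordDist S 1 o ≤ (r : ℝ) := Nat.le_ceil _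
    linarith
  have htinf : SeqToInf (wordDist S) t := by
    intro o M
    set r := ⌈M + wordDist S 1 o⌉₊ with hr
    refine ⟨r, fun m n hm hn => ?_⟩
    have g1 : (r : ℝ) ≤ gprod (wordDist S) 1 (t m) (t n) :=
      gprod_ge_common_prefix hgen (hcfact r m hm) (hcfact r n hn)
    have g2 := gprod_base hsymmG htriG o 1 (t m) (t n)
    have g3 : M + wordDist S 1 o ≤ (r : ℝ) := Nat.le_ceil _
    linarith
  -- not fellow
  have hnotfellow : ¬ SeqFellow (wordDist S) s t := by
    intro hfel
    obtain ⟨N, hN⟩ := hfel 1 1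
    have h1 := hN N N le_rfl le_rfl
    have h2 : gprod (wordDist S) 1 (s N) (t N) ≤ 0 := hbc' N
    linarith
  have hne : Bdry.mk ⟨s, hsinf⟩ ≠ Bdry.mk ⟨t, htinf⟩ := by
    intro heq
    exact hnotfellow (@fellow_of_bdry_eq G (wordDist S) hsymmG hGhyp ⟨s, hsinf⟩ ⟨t, htinf⟩ heq)
  have hconv1 : ConvTo (wordDist S) s (Bdry.mk ⟨s, hsinf⟩) := ⟨hsinf, rfl⟩
  have hconv2 : ConvTo (wordDist S) t (Bdry.mk ⟨t, htinf⟩) := ⟨htinf, rfl⟩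
  obtain ⟨hs', he1⟩ := hCT.2 s _ hconv1
  obtain ⟨ht', he2⟩ := hCT.2 t _ hconv2
  -- image sequences are fellow travellers
  have himg : SeqFellow d (fun n => f (s n)) (fun n => f (t n)) := by
    intro o M
    obtain ⟨N₁, hN₁⟩ := hs' o (M + δX)
    set N₂ := ⌈M + δX + d (f 1) o⌉₊ with hN₂def
    refine ⟨max N₁ N₂, fun m n hm hn => ?_⟩
    have ha : M + δX ≤ gprod d o (f (s m)) (f (s n)) :=
      hN₁ m n (le_trans (le_max_left _ _) hm) (le_trans (le_max_left _ _) hn)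
    have hdiag : M + δX ≤ gprod d o (f (s n)) (f (t n)) := by
      have h1 : ((kap n : ℕ) : ℝ) ≤ gprod d (f 1) (f (s n)) (f (t n)) := hgX' n
      have h2 := gprod_base hsymm htri o (f 1) (f (s n)) (f (t n))
      have h3 : (N₂ : ℕ) ≤ kap n := le_trans (le_trans (le_max_right _ _) hn) (hkapge n)
      have h4 : M + δX + d (f 1) o ≤ (N₂ : ℝ) := Nat.le_ceil _
      have h5 : ((N₂ : ℕ) : ℝ) ≤ ((kap n : ℕ) : ℝ) := Nat.cast_le.2 h3
      linarith
    have hmin := h4X o (f (s m)) (f (s n)) (f (t n))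
    have : M + δX ≤ min (gprod d o (f (s m)) (f (s n))) (gprod d o (f (s n)) (f (t n))) :=
      le_min ha hdiag
    linarith [le_trans this hmin]
  refine ⟨Bdry.mk ⟨s, hsinf⟩, Bdry.mk ⟨t, htinf⟩, hne, ?_⟩
  rw [← he1, ← he2]
  exact Quot.sound himg

end Key
section Helper

lemma min_lip (a b c : ℝ) : |min a c - min b c| ≤ |a - b| := by
  rcases le_total a b with hab | hab
  · rw [abs_of_nonpos (by simp only [sub_nonpos]; exact min_le_min_right c hab),
      abs_of_nonpos (by linarith)]
    rcases le_total b c with hbc | hbc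
    · rw [min_eq_left hbc, min_eq_left (le_trans hab hbc)]
    · rw [min_eq_right hbc]
      rcases le_total a c with hac | hac
      · rw [min_eq_left hac]; linarith
      · rw [min_eq_right hac]; linarith
  · rw [abs_of_nonneg (by simp only [sub_nonneg]; exact min_le_min_right c hab),
      abs_of_nonneg (by linarith)]
    rcases le_total a c with hac | hac
    · rw [min_eq_left hac, min_eq_left (le_trans hab hac)]
    · rw [min_eq_right hac]
      rcases le_total b c with hbc | hbc
      · rw [min_eq_left hbc]; linarith
      · rw [min_eq_right hbc]; linarith

end Helper

/-- Lemma 3.11(3). Suppose a hyperbolic group `G` (with word metric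
w.r.t. a finite generating set `S`) acts properly discontinuously by isometries on a
(proper, geodesic) hyperbolic metric space `X`, `x ∈ X`, and the orbit map
`g ↦ g • x` admits a Cannon–Thurston map `bh`. If the orbit map is not a qi embedding
then `bh` identifies two distinct boundary points. In particular (second conjunct)
the same holds for the Cannon–Thurston map of the inclusion of a hyperbolic subgroup
`H < G` which is not qi embedded in `G`. -/
theorem stmt_8 {G : Type*} [Group G] {X : Type*} [MetricSpace X] [ProperSpace X]
    (hgeo : IsGeodesicMS X)
    (hXhyp : IsHypD (fun a b : X => dist a b))
    (S : Set G) (hS : GenSet S) (hGhyp : IsHypD (wordDist S))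
    [MulAction G X]
    (hiso : ∀ (g : G) (x y : X), dist (g • x) (g • y) = dist x y)
    (hpd : ∀ Kc L : Set X, IsCompact Kc → IsCompact L →
      Set.Finite { g : G | ((g • Kc) ∩ L).Nonempty })
    (x : X)
    (bh : Bdry (wordDist S) → Bdry (fun a b : X => dist a b))
    (hCT : IsCTMapD (wordDist S) (fun a b : X => dist a b) (fun g : G => g • x) bh)
    (hnotqi : ¬ IsQIEmbD (wordDist S) (fun a b : X => dist a b) (fun g : G => g • x)) :
    (∃ ξ₁ ξ₂ : Bdry (wordDist S), ξ₁ ≠ ξ₂ ∧ bh ξ₁ = bh ξ₂) ∧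
    (∀ (H : Subgroup G) (T : Set ↥H), GenSet T → IsHypD (wordDist T) →
      ∀ bi : Bdry (wordDist T) → Bdry (wordDist S),
        IsCTMapD (wordDist T) (wordDist S) (Subtype.val : ↥H → G) bi →
        ¬ IsQIEmbD (wordDist T) (wordDist S) (Subtype.val : ↥H → G) →
        ∃ ξ₁ ξ₂ : Bdry (wordDist T), ξ₁ ≠ ξ₂ ∧ bi ξ₁ = bi ξ₂) := by
  constructor
  · -- orbit map case
    apply key_lemma S hS.1 hS.2 hGhyp (fun a b : X => dist a b)
      (fun a => dist_self a) (fun a b => dist_comm a b) (fun a b c => dist_triangle a b c)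
      hXhyp (fun g : G => g • x)
    · -- hinv
      intro k g h
      simp only [mul_smul]
      exact hiso k _ _
    · -- hproper
      intro R
      apply Set.Finite.subset
        (hpd {x} (Metric.closedBall x (max R 0)) isCompact_singleton
          (isCompact_closedBall x _))
      intro g hg
      simp only [Set.mem_setOf_eq, one_smul] at hg
      refine ⟨g • x, ?_, ?_⟩
      · rw [Set.smul_set_singleton]
        exact rfl
      · rw [Metric.mem_closedBall, dist_comm]
        exact le_trans hg (le_max_left _ _)
    · -- hchain
      intro g
      obtain ⟨γ, hγ0, hγd, hγiso⟩ := hgeo x (g • x)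
      set R' := dist x (g • x) with hR'
      have hR'0 : 0 ≤ R' := dist_nonneg
      refine ⟨⌈R'⌉₊, fun i => γ (min (i : ℝ) R'), ?_, ?_, ?_, ?_⟩
      · show γ (min ((0 : ℕ) : ℝ) R') = (1 : G) • x
        rw [Nat.cast_zero, min_eq_left hR'0, hγ0, one_smul]
      · intro i hi
        show γ (min (i : ℝ) R') = g • x
        have h1 : R' ≤ (i : ℝ) := le_trans (Nat.le_ceil R') (Nat.cast_le.2 hi)
        rw [min_eq_right h1, hγd]
      · intro i j
        show dist (γ (min (i : ℝ) R')) (γ (min (j : ℝ) R')) ≤ |(i : ℝ) - j|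
        have hmem : ∀ m : ℕ, min (m : ℝ) R' ∈ Set.Icc (0 : ℝ) R' :=
          fun m => ⟨le_min (Nat.cast_nonneg m) hR'0, min_le_right _ _⟩
        rw [hγiso _ (hmem i) _ (hmem j)]
        exact min_lip _ _ _
      · show ((⌈R'⌉₊ : ℕ) : ℝ) ≤ dist ((1 : G) • x) (g • x) + 1
        rw [one_smul]
        exact le_of_lt (Nat.ceil_lt_add_one hR'0)
    · exact hCT
    · exact hnotqi
  · -- subgroup case
    intro H T hT hThyp bi hCTi hnotqii
    apply key_lemma T hT.1 hT.2 hThyp (wordDist S)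
      wordDist_self (wordDist_comm hS.2) (wordDist_triangle hS.2)
      hGhyp (Subtype.val : ↥H → G)
    · -- hinv
      intro k g h
      show wordDist S ((k * g : ↥H) : G) ((k * h : ↥H) : G) = _
      rw [Subgroup.coe_mul, Subgroup.coe_mul]
      exact wordDist_left_inv _ _ _
    · -- hproper
      intro R
      apply Set.Finite.subset
        (Set.Finite.preimage (Set.injOn_of_injective Subtype.val_injective)
          (ball_finite hS.1 hS.2 (Nat.floor (max R 0))))
      intro h hh
      simp only [Set.mem_setOf_eq] at hh
      have h1 : wordDist S ((1 : ↥H) : G) (h : G) = (wordLength S (h : G) : ℝ) := by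
        rw [show ((1 : ↥H) : G) = (1 : G) from OneMemClass.coe_one H, wordDist_one_left]
      rw [h1] at hh
      simp only [Set.mem_preimage, Set.mem_setOf_eq]
      exact Nat.le_floor (le_trans hh (le_max_left _ _))
    · -- hchain
      intro h
      obtain ⟨L, c, hc0, hcL, hlip, hlen⟩ := word_chain hS.2 (h : G)
      refine ⟨L, c, ?_, hcL, hlip, ?_⟩
      · rw [hc0, show ((1 : ↥H) : G) = (1 : G) from OneMemClass.coe_one H]
      · rw [show ((1 : ↥H) : G) = (1 : G) from OneMemClass.coe_one H]
        exact hlen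
    · exact hCTi
    · exact hnotqii
end
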